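/- If t ≥ 2g − 1, then the cardinality of Ω_{0,0,t} (i.e. Ω_{r,s,t} with r the zero vector in ℤ^q and s the zero vector in ℤ^{q²−1}) is #Ω_{0,0,t} = 1 − g + t. -/

import Mathlib

open Finset



lemma gauss_nat : ∀ (N : ℕ), 2 * ∑ x ∈ Finset.Ico (0:ℤ) (N:ℤ), x = (N:ℤ) * ((N:ℤ)-1) := by
  intro N
  induction N with
  | zero => simp
  | succ k ih =>
    have h : Finset.Ico (0:ℤ) ((k:ℤ)+1) = insert (k:ℤ) (Finset.Ico 0 (k:ℤ)) := by
      ext x; simp [Finset.mem_Ico]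
    push_cast
    rw [h, Finset.sum_insert (by simp)]
    push_cast at ih
    ring_nf
    ring_nf at ih
    linarith

lemma gauss_int (z : ℤ) (hz : 0 ≤ z) : 2 * ∑ x ∈ Finset.Ico (0:ℤ) z, x = z * (z - 1) := by
  obtain ⟨N, rfl⟩ := Int.eq_ofNat_of_zero_le hz
  exact gauss_nat N

lemma sum_emod (m Q t : ℤ) (hm : 0 < m) (hQ : 0 < Q) (hcop3 : IsCoprime m (Q^3)) :
    ∑ a ∈ Ico (0:ℤ) m, ∑ b ∈ Ico (0:ℤ) (Q+1), (t - (Q^3*a + Q*m*b)) % (m*(Q+1))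
      = ∑ x ∈ Ico (0:ℤ) (m*(Q+1)), x := by
  have hMpos : 0 < m * (Q+1) := by positivity
  rw [← Finset.sum_product']
  set S := (Ico (0:ℤ) m) ×ˢ (Ico (0:ℤ) (Q+1)) with hS
  set f : ℤ × ℤ → ℤ := fun p => (t - (Q^3*p.1 + Q*m*p.2)) % (m*(Q+1)) with hf
  have hmem : ∀ p ∈ S, f p ∈ Ico (0:ℤ) (m*(Q+1)) := by
    intro p _
    simp only [Finset.mem_Ico]
    exact ⟨Int.emod_nonneg _ (ne_of_gt hMpos), Int.emod_lt_of_pos _ hMpos⟩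
  have hinj : ∀ p1 ∈ S, ∀ p2 ∈ S, f p1 = f p2 → p1 = p2 := by
    intro p1 h1 p2 h2 heq
    simp only [hS, Finset.mem_product, Finset.mem_Ico] at h1 h2
    have hdvd : (m*(Q+1)) ∣ (t - (Q^3*p1.1 + Q*m*p1.2)) - (t - (Q^3*p2.1 + Q*m*p2.2)) :=
      Int.ModEq.dvd heq.symm
    have hdvd2 : (m*(Q+1)) ∣ Q^3*(p2.1 - p1.1) + m*(Q*(p2.2 - p1.2)) := by
      have : (t - (Q^3*p1.1 + Q*m*p1.2)) - (t - (Q^3*p2.1 + Q*m*p2.2))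
          = Q^3*(p2.1 - p1.1) + m*(Q*(p2.2 - p1.2)) := by ring
      rwa [this] at hdvd
    have hmdvd : m ∣ (p2.1 - p1.1) * Q^3 := by
      have h1' : m ∣ Q^3*(p2.1 - p1.1) + m*(Q*(p2.2 - p1.2)) :=
        dvd_trans (Dvd.intro _ rfl) hdvd2
      have := h1'.sub (Dvd.intro _ rfl : m ∣ m*(Q*(p2.2 - p1.2)))
      simpa [mul_comm] using this
    have ha : p1.1 = p2.1 := by
      have hd : m ∣ p2.1 - p1.1 := hcop3.dvd_of_dvd_mul_right hmdvd
      have : p2.1 - p1.1 = 0 := Int.eq_zero_of_abs_lt_dvd hd (by rw [abs_lt]; omega)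
      omega
    have hb : p1.2 = p2.2 := by
      have hdvd3 : (m*(Q+1)) ∣ m*(Q*(p2.2 - p1.2)) := by
        have hz : Q^3*(p2.1 - p1.1) = 0 := by rw [ha]; ring
        rw [hz, zero_add] at hdvd2; exact hdvd2
      have hq1 : (Q+1) ∣ Q*(p2.2 - p1.2) := (mul_dvd_mul_iff_left (ne_of_gt hm)).mp hdvd3
      have hcopq : IsCoprime (Q+1) Q := ⟨1, -1, by ring⟩
      have hd : (Q+1) ∣ p2.2 - p1.2 := hcopq.dvd_of_dvd_mul_left hq1
      have : p2.2 - p1.2 = 0 := Int.eq_zero_of_abs_lt_dvd hd (by rw [abs_lt]; omega)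
      omega
    exact Prod.ext ha hb
  have hcard : (Ico (0:ℤ) (m*(Q+1))).card ≤ S.card := by
    rw [hS, Finset.card_product]
    have e1 : ((Ico (0:ℤ) (m*(Q+1))).card : ℤ) = m*(Q+1) := by
      rw [Int.card_Ico]; simpa using Int.toNat_of_nonneg (le_of_lt hMpos)
    have e2 : ((Ico (0:ℤ) m).card : ℤ) = m := by
      rw [Int.card_Ico]; simpa using Int.toNat_of_nonneg (le_of_lt hm)
    have e3 : ((Ico (0:ℤ) (Q+1)).card : ℤ) = Q+1 := by
      rw [Int.card_Ico]; simpa using Int.toNat_of_nonneg (by linarith)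
    have e4 : (((Ico (0:ℤ) m).card * (Ico (0:ℤ) (Q+1)).card : ℕ) : ℤ) = m*(Q+1) := by
      push_cast; rw [e2, e3]
    omega
  refine Finset.sum_bij (fun p _ => f p) hmem (fun p1 h1 p2 h2 => hinj p1 h1 p2 h2) ?_ ?_
  · intro b hb
    obtain ⟨a, ha, e⟩ := Finset.surj_on_of_inj_on_of_card_le (fun p _ => f p) hmem
      (fun p1 p2 h1 h2 => hinj p1 h1 p2 h2) hcard b hb
    exact ⟨a, ha, e.symm⟩
  · intro p _; rfl

lemma uniq_shift (M i x y : ℤ) (hM : 0 < M) (h1 : 0 ≤ i + M*x) (h2 : i + M*x < M)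
    (h3 : 0 ≤ i + M*y) (h4 : i + M*y < M) : x = y := by
  have h5 : M*x < M*(y+1) := by nlinarith
  have h6 : M*y < M*(x+1) := by nlinarith
  have := lt_of_mul_lt_mul_left h5 hM.le
  have := lt_of_mul_lt_mul_left h6 hM.le
  omega

/-- The lattice point set `Ω_{r,s,t}` associated with the GGS curve:
triples `(i, j, k)` with `i + r 0 ≥ 0`, `0 ≤ i + m(q+1) j_μ + r_μ < m(q+1)` for
`μ = 1, …, q-1`, `0 ≤ i + m k_ν + s_ν < m` for `ν = 1, …, q²-1`, and
`q³ i + m(q+1)|j| + m q |k| ≤ t`. -/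
def OmegaSet (q : ℕ) (hq : 0 < q) (m : ℤ) (r : Fin q → ℤ) (s : Fin (q ^ 2 - 1) → ℤ)
    (t : ℤ) : Set (ℤ × (Fin (q - 1) → ℤ) × (Fin (q ^ 2 - 1) → ℤ)) :=
  {p | 0 ≤ p.1 + r ⟨0, hq⟩ ∧
    (∀ μ : Fin (q - 1),
      0 ≤ p.1 + m * ((q : ℤ) + 1) * p.2.1 μ + r ⟨μ.val + 1, by have := μ.isLt; omega⟩ ∧
      p.1 + m * ((q : ℤ) + 1) * p.2.1 μ + r ⟨μ.val + 1, by have := μ.isLt; omega⟩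
        < m * ((q : ℤ) + 1)) ∧
    (∀ ν : Fin (q ^ 2 - 1), 0 ≤ p.1 + m * p.2.2 ν + s ν ∧ p.1 + m * p.2.2 ν + s ν < m) ∧
    (q : ℤ) ^ 3 * p.1 + m * ((q : ℤ) + 1) * (∑ μ, p.2.1 μ)
      + m * (q : ℤ) * (∑ ν, p.2.2 ν) ≤ t}

set_option maxHeartbeats 1000000 in
/-- If `t ≥ 2g - 1`, then `#Ω_{0,0,t} = 1 - g + t`. -/
theorem card_OmegaSet_zero (q n : ℕ) (hq : IsPrimePow q) (hn : Odd n) (hn1 : 1 < n)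
    (m g : ℤ) (hm : m * ((q : ℤ) + 1) = (q : ℤ) ^ n + 1)
    (hg : 2 * g = ((q : ℤ) - 1) * ((q : ℤ) ^ (n + 1) + (q : ℤ) ^ n - (q : ℤ) ^ 2))
    (t : ℤ) (ht : 2 * g - 1 ≤ t) :
    ((OmegaSet q hq.pos m (fun _ => 0) (fun _ => 0) t).ncard : ℤ) = 1 - g + t := by
  have hq2 : 2 ≤ q := hq.two_le
  have hQ2 : (2:ℤ) ≤ (q:ℤ) := by exact_mod_cast hq2
  have hQpos : (0:ℤ) < q := by linarith
  have hq1 : 0 < q - 1 := by omega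
  have hq21 : 0 < q^2 - 1 := by
    have h4 : 2*2 ≤ q*q := Nat.mul_le_mul hq2 hq2
    have : q^2 = q*q := sq q
    omega
  have hm0 : 0 < m := by nlinarith [pow_pos hQpos n]
  have hMpos : (0:ℤ) < m * ((q:ℤ)+1) := by positivity
  have hQn : (q:ℤ)^n = m*((q:ℤ)+1) - 1 := by linarith
  have h2g : 2*g = ((q:ℤ)-1)*((m*((q:ℤ)+1)-1)*((q:ℤ)+1) - (q:ℤ)^2) := by
    rw [hg, pow_succ, hQn]; ring
  -- the parametrizing map
  set Q : ℤ := (q:ℤ) with hQdef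
  set e : ℤ × ℤ × ℤ → ℤ × (Fin (q - 1) → ℤ) × (Fin (q ^ 2 - 1) → ℤ) :=
    fun p => (p.1 + m * p.2.1 + m * (Q+1) * p.2.2,
      fun _ => -p.2.2, fun _ => -(p.2.1 + (Q+1) * p.2.2)) with he
  set T : Set (ℤ × ℤ × ℤ) := {p | 0 ≤ p.1 ∧ p.1 < m ∧ 0 ≤ p.2.1 ∧ p.2.1 < Q+1 ∧ 0 ≤ p.2.2 ∧
    Q^3*p.1 + Q*m*p.2.1 + m*(Q+1)*p.2.2 ≤ t} with hT
  have einj : Function.Injective e := by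
    intro p1 p2 hpe
    have h1 : p1.1 + m * p1.2.1 + m * (Q+1) * p1.2.2
        = p2.1 + m * p2.2.1 + m * (Q+1) * p2.2.2 := congrArg Prod.fst hpe
    have h2 : -p1.2.2 = -p2.2.2 :=
      congrFun (congrArg (fun x => x.2.1) hpe) ⟨0, hq1⟩
    have h3 : -(p1.2.1 + (Q+1) * p1.2.2) = -(p2.2.1 + (Q+1) * p2.2.2) :=
      congrFun (congrArg (fun x => x.2.2) hpe) ⟨0, hq21⟩
    have hc : p1.2.2 = p2.2.2 := by linarith
    have hb : p1.2.1 = p2.2.1 := by rw [hc] at h3; linarith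
    have ha : p1.1 = p2.1 := by rw [hc, hb] at h1; linarith
    exact Prod.ext ha (Prod.ext hb hc)
  have hcast1 : (((q:ℕ) - 1 : ℕ) : ℤ) = Q - 1 := by
    rw [Nat.cast_sub (by omega : 1 ≤ q)]; simp [hQdef]
  have hcast2 : ((q^2 - 1 : ℕ) : ℤ) = Q^2 - 1 := by
    rw [Nat.cast_sub (by nlinarith : 1 ≤ q^2)]; push_cast [hQdef]; ring
  have himg : OmegaSet q hq.pos m (fun _ => 0) (fun _ => 0) t = e '' T := by
    ext p
    simp only [OmegaSet, Set.mem_setOf_eq, add_zero]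
    constructor
    · rintro ⟨h0, hj, hk, hs⟩
      set j0 : ℤ := p.2.1 ⟨0, hq1⟩ with hj0def
      set k0 : ℤ := p.2.2 ⟨0, hq21⟩ with hk0def
      have hjall : ∀ μ, p.2.1 μ = j0 := fun μ =>
        uniq_shift (m*(Q+1)) p.1 _ _ hMpos (hj μ).1 (hj μ).2 (hj ⟨0, hq1⟩).1 (hj ⟨0, hq1⟩).2
      have hkall : ∀ ν, p.2.2 ν = k0 := fun ν =>
        uniq_shift m p.1 _ _ hm0 (hk ν).1 (hk ν).2 (hk ⟨0, hq21⟩).1 (hk ⟨0, hq21⟩).2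
      have hsj : ∑ μ, p.2.1 μ = (Q - 1) * j0 := by
        rw [Finset.sum_congr rfl (fun μ _ => hjall μ), Finset.sum_const, Finset.card_univ,
          Fintype.card_fin, nsmul_eq_mul, hcast1]
      have hsk : ∑ ν, p.2.2 ν = (Q^2 - 1) * k0 := by
        rw [Finset.sum_congr rfl (fun ν _ => hkall ν), Finset.sum_const, Finset.card_univ,
          Fintype.card_fin, nsmul_eq_mul, hcast2]
      rw [hsj, hsk] at hs
      have hj0 := hj ⟨0, hq1⟩
      have hk0 := hk ⟨0, hq21⟩
      rw [← hj0def] at hj0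
      rw [← hk0def] at hk0
      refine ⟨(p.1 + m*k0, -k0 + (Q+1)*j0, -j0), ⟨hk0.1, hk0.2, ?_, ?_, ?_, ?_⟩, ?_⟩
      · -- 0 ≤ b
        show (0:ℤ) ≤ -k0 + (Q+1)*j0
        have key : m*((-k0 + (Q+1)*j0) + 1) > m*0 := by nlinarith [hj0.1, hk0.2]
        have := lt_of_mul_lt_mul_left key hm0.le
        linarith
      · -- b < Q+1
        show -k0 + (Q+1)*j0 < Q+1
        have key : m*(-k0 + (Q+1)*j0) < m*(Q+1) := by nlinarith [hj0.2, hk0.1]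
        exact lt_of_mul_lt_mul_left key hm0.le
      · -- 0 ≤ c
        show (0:ℤ) ≤ -j0
        have key : m*(Q+1)*j0 < m*(Q+1)*1 := by nlinarith [hj0.2, h0]
        have := lt_of_mul_lt_mul_left key hMpos.le
        linarith
      · -- sum bound
        show Q^3*(p.1 + m*k0) + Q*m*(-k0 + (Q+1)*j0) + m*(Q+1)*(-j0) ≤ t
        have hid : Q^3*(p.1 + m*k0) + Q*m*(-k0 + (Q+1)*j0) + m*(Q+1)*(-j0)
            = Q^3*p.1 + m*(Q+1)*((Q-1)*j0) + m*Q*((Q^2-1)*k0) := by ring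
        linarith [hid, hs]
      · -- e applied equals p
        refine Prod.ext ?_ (Prod.ext ?_ ?_)
        · show p.1 + m*k0 + m*(-k0 + (Q+1)*j0) + m*(Q+1)*(-j0) = p.1
          ring
        · funext μ
          show -(-j0) = p.2.1 μ
          rw [hjall μ]; ring
        · funext ν
          show -((-k0 + (Q+1)*j0) + (Q+1)*(-j0)) = p.2.2 ν
          rw [hkall ν]; ring
    · rintro ⟨⟨a, b, c⟩, ⟨h1, h2, h3, h4, h5, h6⟩, rfl⟩
      simp only [hT, Set.mem_setOf_eq] at *
      have hb : b ≤ Q := by linarith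
      have hmb : 0 ≤ m*b := mul_nonneg hm0.le h3
      have hmc : 0 ≤ m*(Q+1)*c := mul_nonneg hMpos.le h5
      have hmbq : m*b ≤ m*Q := mul_le_mul_of_nonneg_left hb hm0.le
      refine ⟨by simpa using by linarith, ?_, ?_, ?_⟩
      · intro μ
        have hid : (a + m*b + m*(Q+1)*c) + m*(Q+1)*(-c) = a + m*b := by ring
        constructor
        · show (0:ℤ) ≤ _
          rw [hid]; linarith
        · show _ < m*(Q+1)
          rw [hid]; linarith
      · intro ν
        have hid : (a + m*b + m*(Q+1)*c) + m*(-(b + (Q+1)*c)) = a := by ring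
        constructor
        · show (0:ℤ) ≤ _
          rw [hid]; linarith
        · show _ < m
          rw [hid]; linarith
      · have hsj : (∑ _μ : Fin (q-1), -c) = (Q - 1) * (-c) := by
          rw [Finset.sum_const, Finset.card_univ, Fintype.card_fin, nsmul_eq_mul, hcast1]
        have hsk : (∑ _ν : Fin (q^2-1), -(b + (Q+1)*c)) = (Q^2 - 1) * (-(b + (Q+1)*c)) := by
          rw [Finset.sum_const, Finset.card_univ, Fintype.card_fin, nsmul_eq_mul, hcast2]
        show Q^3*(a + m*b + m*(Q+1)*c) + m*(Q+1)*(∑ _μ : Fin (q-1), -c)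
            + m*Q*(∑ _ν : Fin (q^2-1), -(b + (Q+1)*c)) ≤ t
        rw [hsj, hsk]
        have hid : Q^3*(a + m*b + m*(Q+1)*c) + m*(Q+1)*((Q-1)*(-c))
            + m*Q*((Q^2-1)*(-(b + (Q+1)*c))) = Q^3*a + Q*m*b + m*(Q+1)*c := by ring
        linarith [hid, h6]
  set F : Finset (ℤ × ℤ × ℤ) :=
    ((Ico (0:ℤ) m) ×ˢ (Ico (0:ℤ) (Q+1)) ×ˢ (Icc (0:ℤ) (t / (m*(Q+1))))).filter
      (fun p => Q^3*p.1 + Q*m*p.2.1 + m*(Q+1)*p.2.2 ≤ t) with hF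
  have hTF : T = ↑F := by
    ext p
    simp only [hT, hF, Set.mem_setOf_eq, Finset.coe_filter, Finset.mem_product,
      Finset.mem_Ico, Finset.mem_Icc]
    constructor
    · rintro ⟨h1, h2, h3, h4, h5, h6⟩
      refine ⟨⟨⟨h1, h2⟩, ⟨h3, h4⟩, h5, ?_⟩, h6⟩
      rw [Int.le_ediv_iff_mul_le hMpos]
      have hA : 0 ≤ Q^3*p.1 := mul_nonneg (by positivity) h1
      have hB : 0 ≤ Q*m*p.2.1 := mul_nonneg (by positivity) h3
      linarith
    · rintro ⟨⟨⟨h1, h2⟩, ⟨h3, h4⟩, h5, _⟩, h6⟩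
      exact ⟨h1, h2, h3, h4, h5, h6⟩
  have hdvdm : m ∣ Q^n + 1 := ⟨Q+1, hm.symm⟩
  have hc1 : IsCoprime (Q^n + 1) Q := by
    refine ⟨1, -(Q^(n-1)), ?_⟩
    have hq' : Q^(n-1)*Q = Q^n := by rw [← pow_succ]; congr 1; omega
    linarith
  have hcopmQ : IsCoprime m Q := hc1.of_isCoprime_of_dvd_left hdvdm
  have hcop3 : IsCoprime m (Q^3) := hcopmQ.pow_right
  have cardA : ((Ico (0:ℤ) m).card : ℤ) = m := by rw [Int.card_Ico]; omega
  have cardB : ((Ico (0:ℤ) (Q+1)).card : ℤ) = Q + 1 := by rw [Int.card_Ico]; omega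
  have SA := gauss_int m hm0.le
  have SB := gauss_int (Q+1) (by linarith)
  have SM := gauss_int (m*(Q+1)) hMpos.le
  have EM := sum_emod m Q t hm0 hQpos hcop3
  have hsmax : 2*g - 1 = Q^3*(m-1) + Q*m*Q - m*(Q+1) := by rw [h2g]; ring
  have hcardF : (F.card : ℤ) = 1 - g + t := by
    have hstep1 : (F.card : ℤ) = ∑ a ∈ Ico (0:ℤ) m, ∑ b ∈ Ico (0:ℤ) (Q+1),
        ((t - (Q^3*a + Q*m*b))/(m*(Q+1)) + 1) := by
      rw [hF, Finset.card_filter, Finset.sum_product]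
      push_cast
      refine Finset.sum_congr rfl ?_
      intro a ha
      rw [Finset.sum_product]
      refine Finset.sum_congr rfl ?_
      intro b hb
      simp only [Finset.mem_Ico] at ha hb
      have hs0 : 0 ≤ Q^3*a + Q*m*b :=
        add_nonneg (mul_nonneg (by positivity) ha.1) (mul_nonneg (by positivity) hb.1)
      have htms : -(m*(Q+1)) ≤ t - (Q^3*a + Q*m*b) := by
        have h1 : Q^3*a ≤ Q^3*(m-1) := mul_le_mul_of_nonneg_left (by linarith) (by positivity)
        have h2 : Q*m*b ≤ Q*m*Q := mul_le_mul_of_nonneg_left (by linarith)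
          (by positivity)
        linarith
      have hfil : (Icc (0:ℤ) (t/(m*(Q+1)))).filter
          (fun c => Q^3*a + Q*m*b + m*(Q+1)*c ≤ t)
          = Icc (0:ℤ) ((t - (Q^3*a + Q*m*b))/(m*(Q+1))) := by
        ext c
        simp only [Finset.mem_filter, Finset.mem_Icc]
        constructor
        · rintro ⟨⟨hc0, _⟩, hc2⟩
          refine ⟨hc0, ?_⟩
          rw [Int.le_ediv_iff_mul_le hMpos]
          linarith
        · rintro ⟨hc0, hc1'⟩
          rw [Int.le_ediv_iff_mul_le hMpos] at hc1'
          refine ⟨⟨hc0, ?_⟩, by linarith⟩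
          rw [Int.le_ediv_iff_mul_le hMpos]
          linarith
      have hdivlb : -1 ≤ (t - (Q^3*a + Q*m*b))/(m*(Q+1)) := by
        have h1 := Int.ediv_le_ediv hMpos htms
        have h2 : (-(m*(Q+1)))/(m*(Q+1)) = -1 := by
          have := Int.mul_ediv_cancel (-1) (ne_of_gt hMpos)
          simpa using this
        linarith
      calc (∑ c ∈ Icc (0:ℤ) (t/(m*(Q+1))),
            if Q^3*a + Q*m*b + m*(Q+1)*c ≤ t then (1:ℤ) else 0)
          = (((Icc (0:ℤ) (t/(m*(Q+1)))).filter
              (fun c => Q^3*a + Q*m*b + m*(Q+1)*c ≤ t)).card : ℤ) := by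
            rw [Finset.sum_boole]
        _ = ((Icc (0:ℤ) ((t - (Q^3*a + Q*m*b))/(m*(Q+1)))).card : ℤ) := by rw [hfil]
        _ = (t - (Q^3*a + Q*m*b))/(m*(Q+1)) + 1 := by rw [Int.card_Icc]; omega
    rw [hstep1]
    have hfinal : 2*(m*(Q+1)) * (∑ a ∈ Ico (0:ℤ) m, ∑ b ∈ Ico (0:ℤ) (Q+1),
        ((t - (Q^3*a + Q*m*b))/(m*(Q+1)) + 1)) = 2*(m*(Q+1))*(1 - g + t) := by
      have expand : ∀ a b : ℤ, 2*(m*(Q+1))*((t - (Q^3*a + Q*m*b))/(m*(Q+1)) + 1)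
          = (2*(t - (Q^3*a + Q*m*b)) + 2*(m*(Q+1)))
            - 2*((t - (Q^3*a + Q*m*b)) % (m*(Q+1))) := by
        intro a b
        have h := Int.emod_add_mul_ediv (t - (Q^3*a + Q*m*b)) (m*(Q+1))
        linarith
      have hmul : 2*(m*(Q+1)) * (∑ a ∈ Ico (0:ℤ) m, ∑ b ∈ Ico (0:ℤ) (Q+1),
          ((t - (Q^3*a + Q*m*b))/(m*(Q+1)) + 1))
          = ∑ a ∈ Ico (0:ℤ) m, ∑ b ∈ Ico (0:ℤ) (Q+1),
            (2*(m*(Q+1))*((t - (Q^3*a + Q*m*b))/(m*(Q+1)) + 1)) := by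
        rw [Finset.mul_sum]
        exact Finset.sum_congr rfl (fun a _ => by rw [Finset.mul_sum])
      have step2 : ∑ a ∈ Ico (0:ℤ) m, ∑ b ∈ Ico (0:ℤ) (Q+1),
          (2*(m*(Q+1))*((t - (Q^3*a + Q*m*b))/(m*(Q+1)) + 1))
          = (∑ a ∈ Ico (0:ℤ) m, ∑ b ∈ Ico (0:ℤ) (Q+1),
              (2*(t - (Q^3*a + Q*m*b)) + 2*(m*(Q+1))))
            - (∑ a ∈ Ico (0:ℤ) m, ∑ b ∈ Ico (0:ℤ) (Q+1),
              2*((t - (Q^3*a + Q*m*b)) % (m*(Q+1)))) := by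
        rw [← Finset.sum_sub_distrib]
        refine Finset.sum_congr rfl (fun a _ => ?_)
        rw [← Finset.sum_sub_distrib]
        exact Finset.sum_congr rfl (fun b _ => expand a b)
      have hmod2 : ∑ a ∈ Ico (0:ℤ) m, ∑ b ∈ Ico (0:ℤ) (Q+1),
          2*((t - (Q^3*a + Q*m*b)) % (m*(Q+1)))
          = 2 * ∑ x ∈ Ico (0:ℤ) (m*(Q+1)), x := by
        rw [← EM, Finset.mul_sum]
        exact Finset.sum_congr rfl (fun a _ => by rw [Finset.mul_sum])
      have hlin : ∀ a : ℤ, ∑ b ∈ Ico (0:ℤ) (Q+1), (2*(t - (Q^3*a + Q*m*b)) + 2*(m*(Q+1)))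
          = (Q+1)*(2*t + 2*(m*(Q+1)) - 2*Q^3*a)
            + (-(2*Q*m))*(∑ x ∈ Ico (0:ℤ) (Q+1), x) := by
        intro a
        have h1 : ∑ b ∈ Ico (0:ℤ) (Q+1), (2*(t - (Q^3*a + Q*m*b)) + 2*(m*(Q+1)))
            = ∑ b ∈ Ico (0:ℤ) (Q+1), ((2*t + 2*(m*(Q+1)) - 2*Q^3*a) + (-(2*Q*m))*b) :=
          Finset.sum_congr rfl (fun b _ => by ring)
        rw [h1, Finset.sum_add_distrib, Finset.sum_const, ← Finset.mul_sum, nsmul_eq_mul, cardB]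
      have hX : ∑ a ∈ Ico (0:ℤ) m, ∑ b ∈ Ico (0:ℤ) (Q+1),
          (2*(t - (Q^3*a + Q*m*b)) + 2*(m*(Q+1)))
          = m*((Q+1)*(2*t + 2*(m*(Q+1)))) + (-(2*Q^3*(Q+1)))*(∑ x ∈ Ico (0:ℤ) m, x)
            + m*((-(2*Q*m))*(∑ x ∈ Ico (0:ℤ) (Q+1), x)) := by
        have h1 : ∑ a ∈ Ico (0:ℤ) m, ∑ b ∈ Ico (0:ℤ) (Q+1),
            (2*(t - (Q^3*a + Q*m*b)) + 2*(m*(Q+1)))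
            = ∑ a ∈ Ico (0:ℤ) m, ((Q+1)*(2*t + 2*(m*(Q+1)) - 2*Q^3*a)
              + (-(2*Q*m))*(∑ x ∈ Ico (0:ℤ) (Q+1), x)) :=
          Finset.sum_congr rfl (fun a _ => hlin a)
        have h2 : ∑ a ∈ Ico (0:ℤ) m, (Q+1)*(2*t + 2*(m*(Q+1)) - 2*Q^3*a)
            = ∑ a ∈ Ico (0:ℤ) m, (((Q+1)*(2*t + 2*(m*(Q+1)))) + (-(2*Q^3*(Q+1)))*a) :=
          Finset.sum_congr rfl (fun a _ => by ring)
        rw [h1, Finset.sum_add_distrib, Finset.sum_const, nsmul_eq_mul, cardA, h2,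
          Finset.sum_add_distrib, Finset.sum_const, ← Finset.mul_sum, nsmul_eq_mul, cardA]
        try ring
      rw [hmul, step2, hmod2, hX]
      linear_combination (-(Q^3*(Q+1)))*SA + (-(Q*m*m))*SB + (-1)*SM + (m*(Q+1))*h2g
    have h2M : (2*(m*(Q+1))) ≠ 0 := by positivity
    exact mul_left_cancel₀ h2M hfinal
  rw [himg, Set.ncard_image_of_injective _ einj, hTF, Set.ncard_coe_finset]
  exact hcardF
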